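/- arXiv:1404.0217 — 8 statements merged into one kernel-verified Lean document; each statement's English description precedes it below -/
import Mathlib

section
/- Let n be a positive integer and let x be a real number with x > 1. Then the lacunary polynomial satisfies the integral representation ℘_n(x^{-2}) = (1/(2√(π log x))) ∫_{-∞}^{∞} exp(−s²/(4 log x)) (1 + x e^{is})^n ds, where the integral is over the real line and e^{is} denotes the complex exponential. -/
open Complex Finset MeasureTheory

/-- For a positive integer `n` and a real `x > 1`, the lacunary binomial-type polynomial
`℘_n(x⁻²) = ∑_{k=0}^n C(n,k) (x⁻²)^{k(k-1)/2}` has the integral representation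
`℘_n(x⁻²) = (1/(2√(π log x))) ∫_ℝ exp(−s²/(4 log x)) (1 + x e^{is})^n ds`. -/
theorem lacunary_integral_representation_real (n : ℕ) (hn : 1 ≤ n) (x : ℝ) (hx : 1 < x) :
    (∑ k ∈ Finset.range (n + 1),
        (n.choose k : ℂ) * ((x : ℂ) ^ (-2 : ℤ)) ^ (k * (k - 1) / 2)) =
      (1 / (2 * Real.sqrt (Real.pi * Real.log x)) : ℂ) *
        ∫ s : ℝ, Complex.exp (-(s : ℂ) ^ 2 / (4 * (Real.log x : ℂ))) *
          (1 + (x : ℂ) * Complex.exp (Complex.I * (s : ℂ))) ^ n := by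
  have hx0 : (0:ℝ) < x := by linarith
  have ha : 0 < Real.log x := Real.log_pos hx
  set a : ℝ := Real.log x with ha_def
  set b : ℂ := 1 / (4 * (a:ℂ)) with hb_def
  have haC : (a:ℂ) ≠ 0 := by exact_mod_cast ne_of_gt ha
  have hb : 0 < b.re := by
    have h : b = ((1 / (4*a) : ℝ) : ℂ) := by rw [hb_def]; push_cast; ring
    rw [h, Complex.ofReal_re]; positivity
  have hsq : 0 < Real.sqrt (Real.pi * a) := Real.sqrt_pos.mpr (by positivity)
  have hxC : (x:ℂ) ≠ 0 := by exact_mod_cast ne_of_gt hx0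
  -- expand integrand
  have hfun : ∀ s : ℝ, cexp (-(s:ℂ)^2/(4*(a:ℂ))) * (1 + (x:ℂ)*cexp (I*(s:ℂ)))^n
      = ∑ k ∈ Finset.range (n+1),
          ((n.choose k : ℂ) * (x:ℂ)^k) * (cexp (I*(k:ℂ)*(s:ℂ)) * cexp (-b*(s:ℂ)^2)) := by
    intro s
    rw [add_comm (1:ℂ), add_pow, Finset.mul_sum]
    refine Finset.sum_congr rfl fun k _ => ?_
    rw [mul_pow, one_pow, ← Complex.exp_nat_mul]
    have h1 : ((k:ℂ) * (I * (s:ℂ))) = I*(k:ℂ)*(s:ℂ) := by ring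
    have h2 : (-(s:ℂ)^2/(4*(a:ℂ))) = -b*(s:ℂ)^2 := by rw [hb_def]; ring
    rw [h1, h2]; ring
  have hint : ∀ k ∈ Finset.range (n+1), Integrable (fun s : ℝ =>
      ((n.choose k : ℂ) * (x:ℂ)^k) * (cexp (I*(k:ℂ)*(s:ℂ)) * cexp (-b*(s:ℂ)^2))) := by
    intro k _
    have h := (integrable_cexp_quadratic hb (I*(k:ℂ)) 0).const_mul ((n.choose k : ℂ) * (x:ℂ)^k)
    have heq : (fun s : ℝ => ((n.choose k : ℂ) * (x:ℂ)^k) *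
          (cexp (I*(k:ℂ)*(s:ℂ)) * cexp (-b*(s:ℂ)^2)))
        = fun s : ℝ => ((n.choose k : ℂ) * (x:ℂ)^k) *
          cexp (-b*(s:ℂ)^2 + I*(k:ℂ)*(s:ℂ) + 0) := by
      funext s
      congr 1
      rw [← Complex.exp_add]
      congr 1
      ring
    rw [heq]
    exact h
  have hI : (∫ s : ℝ, cexp (-(s:ℂ)^2/(4*(a:ℂ))) * (1 + (x:ℂ)*cexp (I*(s:ℂ)))^n)
      = ∑ k ∈ Finset.range (n+1), ((n.choose k : ℂ) * (x:ℂ)^k) *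
          (((Real.pi:ℂ)/b)^(1/2 : ℂ) * cexp (-(k:ℂ)^2/(4*b))) := by
    simp_rw [hfun]
    rw [integral_finset_sum _ hint]
    refine Finset.sum_congr rfl fun k _ => ?_
    rw [integral_const_mul, fourierIntegral_gaussian hb (k:ℂ)]
  -- constant
  have hC : ((Real.pi:ℂ)/b)^(1/2 : ℂ) = ((2*Real.sqrt (Real.pi*a) : ℝ) : ℂ) := by
    have h1 : ((Real.pi:ℂ)/b) = ((4*Real.pi*a : ℝ) : ℂ) := by
      rw [hb_def]; push_cast; field_simp
    rw [h1, show ((1:ℂ)/2) = (((1:ℝ)/2 : ℝ) : ℂ) by norm_num,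
      ← Complex.ofReal_cpow (by positivity)]
    norm_cast
    rw [← Real.sqrt_eq_rpow,
      show ((4*Real.pi*a : ℝ)) = (2:ℝ)^2 * (Real.pi*a) by ring,
      Real.sqrt_mul (by positivity), Real.sqrt_sq (by norm_num)]
  -- exponent simplification per term
  have hterm : ∀ k : ℕ, (x:ℂ)^k * cexp (-(k:ℂ)^2 * (a:ℂ)) = ((x:ℂ)^(-2 : ℤ))^(k*(k-1)/2) := by
    intro k
    have hdvd : 2 ∣ k * (k - 1) := by
      rcases Nat.even_or_odd k with h | h
      · exact Dvd.dvd.mul_right h.two_dvd _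
      · exact Dvd.dvd.mul_left (Nat.Odd.sub_odd h odd_one).two_dvd _
    have hexp : cexp (-(k:ℂ)^2 * (a:ℂ)) = (x:ℂ) ^ (-((k:ℤ))^2) := by
      have h1 : cexp ((a:ℂ)) = (x:ℂ) := by
        rw [← Complex.ofReal_exp, Real.exp_log hx0]
      rw [show (-(k:ℂ)^2 * (a:ℂ)) = ((-((k:ℤ))^2 : ℤ) : ℂ) * (a:ℂ) by push_cast; ring,
        Complex.exp_int_mul, h1]
    rw [hexp, ← zpow_natCast (x:ℂ) k, ← zpow_add₀ hxC,
      ← zpow_natCast ((x:ℂ)^(-2 : ℤ)) (k*(k-1)/2), ← zpow_mul]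
    congr 1
    rcases Nat.eq_zero_or_pos k with rfl | hk
    · simp
    obtain ⟨m, hm⟩ := hdvd
    rw [hm, Nat.mul_div_cancel_left _ (by norm_num : 0 < 2)]
    zify [hk] at hm
    push_cast
    linear_combination -hm
  rw [hI, hC, Finset.mul_sum]
  refine Finset.sum_congr rfl fun k _ => ?_
  have h4b : -(k:ℂ)^2/(4*b) = -(k:ℂ)^2 * (a:ℂ) := by
    rw [hb_def]; field_simp
  rw [h4b, ← hterm k]
  have hsC : ((2*Real.sqrt (Real.pi*a) : ℝ) : ℂ) ≠ 0 := by
    exact_mod_cast ne_of_gt (by positivity)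
  push_cast
  have h1 : ((Real.sqrt Real.pi : ℝ) : ℂ) ≠ 0 := by
    exact_mod_cast ne_of_gt (Real.sqrt_pos.mpr Real.pi_pos)
  have h2 : ((Real.sqrt a : ℝ) : ℂ) ≠ 0 := by
    exact_mod_cast ne_of_gt (Real.sqrt_pos.mpr ha)
  field_simp
end

section
/- Let n be a positive integer and let x be a nonzero complex number with |x| > 1 and |arg x| ≤ π/2. Then, with log x the principal branch of the logarithm and √ the principal square root, ℘_n(x^{-2}) = (1/(2√(π log x))) ∫_{−∞}^{∞} exp(−s²/(4 log x)) (1 + x e^{is})^n ds, the integral being over the real line and absolutely convergent. -/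
open Complex Finset MeasureTheory

/-- For a positive integer `n` and a nonzero complex `x` with `|x| > 1` and `|arg x| ≤ π/2`,
the lacunary binomial-type polynomial `℘_n(x⁻²)` has the integral representation
`℘_n(x⁻²) = (1/(2√(π log x))) ∫_ℝ exp(−s²/(4 log x)) (1 + x e^{is})^n ds`,
with the principal branch of the logarithm and the principal square root, the integral
being absolutely convergent. -/
theorem lacunary_integral_representation_complex (n : ℕ) (hn : 1 ≤ n) (x : ℂ) (hx0 : x ≠ 0)
    (hx : 1 < ‖x‖) (harg : |x.arg| ≤ Real.pi / 2) :
    Integrable (fun s : ℝ =>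
        Complex.exp (-(s : ℂ) ^ 2 / (4 * Complex.log x)) *
          (1 + x * Complex.exp (Complex.I * (s : ℂ))) ^ n) ∧
      (∑ k ∈ Finset.range (n + 1),
          (n.choose k : ℂ) * (x ^ (-2 : ℤ)) ^ (k * (k - 1) / 2)) =
        (1 / (2 * ((Real.pi : ℂ) * Complex.log x) ^ ((1 : ℂ) / 2))) *
          ∫ s : ℝ, Complex.exp (-(s : ℂ) ^ 2 / (4 * Complex.log x)) *
            (1 + x * Complex.exp (Complex.I * (s : ℂ))) ^ n := by
  set L := Complex.log x with hLdef
  have hLre : 0 < L.re := by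
    rw [hLdef, Complex.log_re]
    exact Real.log_pos hx
  have hL : L ≠ 0 := by
    intro h; rw [h] at hLre; simp at hLre
  have h4L : (4 : ℂ) * L ≠ 0 := mul_ne_zero (by norm_num) hL
  set b : ℂ := ((4 : ℂ) * L)⁻¹ with hbdef
  have hbre : 0 < b.re := by
    rw [hbdef, Complex.inv_re]
    apply div_pos
    · simp only [Complex.mul_re]
      norm_num
      linarith
    · exact Complex.normSq_pos.mpr h4L
  have hexpdiv : ∀ s : ℝ, -(s : ℂ) ^ 2 / (4 * L) = -b * (s : ℂ) ^ 2 := by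
    intro s; rw [hbdef]; field_simp
  -- integrability of the Gaussian factor
  have hgauss : Integrable (fun s : ℝ => Complex.exp (-(s : ℂ) ^ 2 / (4 * L))) := by
    have h := integrable_cexp_quadratic hbre 0 0
    refine h.congr (Filter.Eventually.of_forall fun s => ?_)
    show Complex.exp (-b * (s : ℂ) ^ 2 + 0 * (s : ℂ) + 0) = Complex.exp (-(s : ℂ) ^ 2 / (4 * L))
    rw [hexpdiv s]; norm_num
  -- the oscillating factor is continuous and bounded
  have hmeas : Continuous fun s : ℝ => (1 + x * Complex.exp (Complex.I * (s : ℂ))) ^ n := by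
    fun_prop
  have hbound : ∀ s : ℝ, ‖(1 + x * Complex.exp (Complex.I * (s : ℂ))) ^ n‖
      ≤ (1 + ‖x‖) ^ n := by
    intro s
    rw [norm_pow]
    refine pow_le_pow_left₀ (norm_nonneg _) ?_ n
    calc ‖1 + x * Complex.exp (Complex.I * (s : ℂ))‖
        ≤ ‖(1 : ℂ)‖ + ‖x * Complex.exp (Complex.I * (s : ℂ))‖ := norm_add_le _ _
      _ = 1 + ‖x‖ := by
          simp [norm_mul, Complex.norm_exp, Complex.mul_re]
  have hInt : Integrable (fun s : ℝ =>
      Complex.exp (-(s : ℂ) ^ 2 / (4 * L)) *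
        (1 + x * Complex.exp (Complex.I * (s : ℂ))) ^ n) := by
    have h := hgauss.bdd_mul hmeas.aestronglyMeasurable (Filter.Eventually.of_forall hbound)
    exact h.congr (Filter.Eventually.of_forall fun s => mul_comm _ _)
  refine ⟨hInt, ?_⟩
  -- binomial expansion
  have hbinom : ∀ s : ℝ, (1 + x * Complex.exp (Complex.I * (s : ℂ))) ^ n
      = ∑ k ∈ Finset.range (n + 1),
          (n.choose k : ℂ) * x ^ k * Complex.exp (Complex.I * k * s) := by
    intro s
    rw [add_comm, add_pow]
    refine Finset.sum_congr rfl fun k _ => ?_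
    rw [mul_pow, one_pow, mul_one,
      show Complex.I * (k : ℂ) * (s : ℂ) = (k : ℕ) * (Complex.I * s) by push_cast; ring,
      Complex.exp_nat_mul]
    ring
  -- each summand is integrable
  have htermInt : ∀ k : ℕ, Integrable (fun s : ℝ =>
      (n.choose k : ℂ) * x ^ k *
        (Complex.exp (Complex.I * k * s) * Complex.exp (-(s : ℂ) ^ 2 / (4 * L)))) := by
    intro k
    apply Integrable.const_mul
    have h := integrable_cexp_quadratic hbre (Complex.I * k) 0
    refine h.congr (Filter.Eventually.of_forall fun s => ?_)
    show Complex.exp (-b * (s : ℂ) ^ 2 + Complex.I * k * (s : ℂ) + 0)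
        = Complex.exp (Complex.I * k * s) * Complex.exp (-(s : ℂ) ^ 2 / (4 * L))
    rw [← Complex.exp_add, hexpdiv s]
    congr 1
    ring
  -- swap sum and integral
  have h1 : (∫ s : ℝ, Complex.exp (-(s : ℂ) ^ 2 / (4 * L)) *
        (1 + x * Complex.exp (Complex.I * (s : ℂ))) ^ n)
      = ∑ k ∈ Finset.range (n + 1), (n.choose k : ℂ) * x ^ k *
          ∫ s : ℝ, Complex.exp (Complex.I * k * s) * Complex.exp (-(s : ℂ) ^ 2 / (4 * L)) := by
    have heq : ∀ s : ℝ, Complex.exp (-(s : ℂ) ^ 2 / (4 * L)) *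
        (1 + x * Complex.exp (Complex.I * (s : ℂ))) ^ n
        = ∑ k ∈ Finset.range (n + 1), (n.choose k : ℂ) * x ^ k *
            (Complex.exp (Complex.I * k * s) * Complex.exp (-(s : ℂ) ^ 2 / (4 * L))) := by
      intro s
      rw [hbinom s, Finset.mul_sum]
      exact Finset.sum_congr rfl fun k _ => by ring
    simp_rw [heq]
    rw [integral_finset_sum _ (fun k _ => htermInt k)]
    exact Finset.sum_congr rfl fun k _ => integral_const_mul _ _
  -- evaluate each Gaussian integral
  have hπL : (Real.pi : ℂ) * L ≠ 0 :=
    mul_ne_zero (by exact_mod_cast Real.pi_ne_zero) hL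
  have hfour : ∀ k : ℕ,
      (∫ s : ℝ, Complex.exp (Complex.I * k * s) * Complex.exp (-(s : ℂ) ^ 2 / (4 * L)))
        = 2 * ((Real.pi : ℂ) * L) ^ ((1 : ℂ) / 2) * x ^ (-((k : ℤ)) ^ 2) := by
    intro k
    have h := fourierIntegral_gaussian hbre (k : ℂ)
    have heq : (∫ s : ℝ, Complex.exp (Complex.I * k * s) * Complex.exp (-(s : ℂ) ^ 2 / (4 * L)))
        = ((Real.pi : ℂ) / b) ^ ((1 : ℂ) / 2) * Complex.exp (-(k : ℂ) ^ 2 / (4 * b)) := by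
      rw [← h]
      congr 1
      funext s
      rw [hexpdiv s]
    rw [heq]
    have hπb : (Real.pi : ℂ) / b = 4 * ((Real.pi : ℂ) * L) := by
      rw [hbdef]; field_simp
    have h4b : (4 : ℂ) * b = L⁻¹ := by
      rw [hbdef]
      field_simp
    rw [hπb, h4b]
    have hsqrt : ((4 : ℂ) * ((Real.pi : ℂ) * L)) ^ ((1 : ℂ) / 2)
        = 2 * ((Real.pi : ℂ) * L) ^ ((1 : ℂ) / 2) := by
      rw [show ((4 : ℂ)) = ((4 : ℝ) : ℂ) by norm_num,
        Complex.cpow_def_of_ne_zero (mul_ne_zero (by norm_num) hπL),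
        Complex.cpow_def_of_ne_zero hπL,
        Complex.log_ofReal_mul (by norm_num) hπL, add_mul, Complex.exp_add]
      congr 1
      rw [show ((Real.log 4 : ℝ) : ℂ) * (1 / 2) = ((Real.log 4 / 2 : ℝ) : ℂ) by push_cast; ring,
        ← Complex.ofReal_exp,
        show Real.log 4 / 2 = Real.log 2 by
          rw [show (4 : ℝ) = 2 ^ 2 by norm_num, Real.log_pow]; push_cast; ring,
        Real.exp_log (by norm_num)]
      norm_num
    have hexpk : -(k : ℂ) ^ 2 / L⁻¹ = ((-((k : ℤ)) ^ 2 : ℤ) : ℂ) * L := by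
      rw [div_eq_mul_inv, inv_inv]; push_cast; ring
    rw [hsqrt, hexpk, Complex.exp_int_mul, hLdef, Complex.exp_log hx0]
  rw [h1]
  simp_rw [hfour]
  have hW : ((Real.pi : ℂ) * L) ^ ((1 : ℂ) / 2) ≠ 0 := by
    simp [Complex.cpow_eq_zero_iff, hπL]
  rw [Finset.mul_sum]
  refine Finset.sum_congr rfl fun k _ => ?_
  have hcollect : 1 / (2 * ((Real.pi : ℂ) * L) ^ ((1 : ℂ) / 2)) *
      ((n.choose k : ℂ) * x ^ k *
        (2 * ((Real.pi : ℂ) * L) ^ ((1 : ℂ) / 2) * x ^ (-((k : ℤ)) ^ 2)))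
      = (n.choose k : ℂ) * (x ^ k * x ^ (-((k : ℤ)) ^ 2)) := by
    field_simp
  rw [hcollect]
  congr 1
  rcases k with _ | j
  · simp
  · simp only [Nat.add_sub_cancel]
    have hdvd : 2 ∣ (j + 1) * j := by
      rw [mul_comm]
      exact (Nat.even_mul_succ_self j).two_dvd
    set m : ℕ := (j + 1) * j / 2 with hm
    have h2 : m * 2 = (j + 1) * j := Nat.div_mul_cancel hdvd
    rw [← zpow_natCast (x ^ (-2 : ℤ)) m, ← zpow_mul, ← zpow_natCast x (j + 1),
      ← zpow_add₀ hx0]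
    congr 1
    have h2' : (m : ℤ) * 2 = ((j : ℤ) + 1) * j := by exact_mod_cast h2
    push_cast
    linear_combination -h2'
end

section
/- Let x be a real number with x > 1 and for each positive integer n let r(n) be the unique positive real solution of t(e^t + x) = 2 n x log x. Then r(n) − log n + log log n converges to log(2 x log x) as n → ∞; equivalently, r(n) = log(2 n x log x/ log n) + o(1) as n → ∞. -/
open Filter

lemma aux_log_add_div (a : ℝ) : Tendsto (fun y : ℝ => Real.log (a + y) / y) atTop (nhds 0) := by
  have hlog : Tendsto (fun z : ℝ => Real.log z / z) atTop (nhds 0) :=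
    Real.isLittleO_log_id_atTop.tendsto_div_nhds_zero
  have hay : Tendsto (fun y : ℝ => a + y) atTop atTop :=
    tendsto_atTop_add_const_left atTop a tendsto_id
  have t1 : Tendsto (fun y : ℝ => Real.log (a + y) / (a + y)) atTop (nhds 0) := hlog.comp hay
  have t2 : Tendsto (fun y : ℝ => (a + y) / y) atTop (nhds 1) := by
    have h0 : Tendsto (fun y : ℝ => a / y + 1) atTop (nhds (0 + 1)) :=
      (tendsto_const_nhds.div_atTop tendsto_id).add tendsto_const_nhds
    rw [zero_add] at h0
    refine h0.congr' ?_
    filter_upwards [eventually_gt_atTop (0:ℝ)] with y hy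
    field_simp
  have := t1.mul t2
  rw [zero_mul] at this
  refine this.congr' ?_
  filter_upwards [eventually_gt_atTop (max 1 (1 - a))] with y hy
  have hy0 : y ≠ 0 := by
    have := lt_of_le_of_lt (le_max_left 1 (1-a)) hy; positivity
  have hay0 : a + y ≠ 0 := by
    have := lt_of_le_of_lt (le_max_right 1 (1-a)) hy; nlinarith
  field_simp

/-- For a real `x > 1`, let `r(n)` be the unique positive real solution of
`t(e^t + x) = 2 n x log x`. Then `r(n) − log n + log log n → log(2 x log x)` as `n → ∞`;
equivalently, `r(n) = log(2 n x log x / log n) + o(1)`. -/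
theorem saddle_radius_asymptotics (x : ℝ) (hx : 1 < x) (r : ℕ → ℝ)
    (hr : ∀ n : ℕ, 1 ≤ n → 0 < r n ∧ r n * (Real.exp (r n) + x) = 2 * n * x * Real.log x) :
    Tendsto (fun n : ℕ => r n - Real.log n + Real.log (Real.log n)) atTop
      (nhds (Real.log (2 * x * Real.log x))) := by
  have hx0 : (0:ℝ) < x := lt_trans one_pos hx
  have hlogx : 0 < Real.log x := Real.log_pos hx
  set c := 2 * x * Real.log x with hc_def
  have hc : 0 < c := by positivity
  have hnat : Tendsto (fun n : ℕ => (n:ℝ)) atTop atTop := tendsto_natCast_atTop_atTop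
  have hcn : Tendsto (fun n : ℕ => c * (n:ℝ)) atTop atTop := hnat.const_mul_atTop hc
  have hlogn : Tendsto (fun n : ℕ => Real.log n) atTop atTop :=
    Real.tendsto_log_atTop.comp hnat
  -- rewrite the equation using c
  have heq : ∀ n : ℕ, 1 ≤ n → r n * (Real.exp (r n) + x) = c * n := by
    intro n hn
    rw [(hr n hn).2, hc_def]; ring
  -- upper bound
  have hub : ∀ᶠ n : ℕ in atTop, r n ≤ Real.log (c * n) := by
    filter_upwards [hcn.eventually_ge_atTop (Real.exp 1), eventually_ge_atTop 1] with n hcne hn1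
    have hrpos := (hr n hn1).1
    have he := heq n hn1
    have hcn0 : (0:ℝ) < c * n := lt_of_lt_of_le (Real.exp_pos 1) hcne
    have h1 : r n * Real.exp (r n) ≤ c * n := by nlinarith [Real.exp_pos (r n)]
    rcases le_or_gt 1 (r n) with h | h
    · have h2 : Real.exp (r n) ≤ c * n := by nlinarith [Real.exp_pos (r n)]
      calc r n = Real.log (Real.exp (r n)) := (Real.log_exp _).symm
        _ ≤ Real.log (c * n) := Real.log_le_log (Real.exp_pos _) h2
    · have : (1:ℝ) ≤ Real.log (c * n) := by
        rw [Real.le_log_iff_exp_le hcn0]; exact hcne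
      linarith
  -- lower bound
  have hlb : ∀ᶠ n : ℕ in atTop, 1 ≤ r n := by
    filter_upwards [hcn.eventually_ge_atTop (Real.exp 2 * (1 + x)), eventually_ge_atTop 1]
      with n hcne hn1
    have hrpos := (hr n hn1).1
    have he := heq n hn1
    have hexp1 : (1:ℝ) ≤ Real.exp (r n) := Real.one_le_exp hrpos.le
    have hr_le : r n ≤ Real.exp (r n) := by
      have := Real.add_one_le_exp (r n); linarith
    have h1 : c * n ≤ (1 + x) * Real.exp (r n) ^ 2 := by
      have hxle : x ≤ x * Real.exp (r n) := by nlinarith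
      nlinarith [Real.exp_pos (r n)]
    have h2 : Real.exp 2 ≤ Real.exp (r n) ^ 2 := by
      have : Real.exp 2 * (1 + x) ≤ (1 + x) * Real.exp (r n) ^ 2 := le_trans hcne h1
      nlinarith
    have h3 : Real.exp 2 ≤ Real.exp (2 * r n) := by
      rw [two_mul, Real.exp_add]; nlinarith [Real.exp_pos (r n)]
    have := Real.exp_le_exp.mp h3
    linarith
  -- epsilon tends to zero
  have heps : Tendsto (fun n : ℕ => x * r n / (c * n)) atTop (nhds 0) := by
    have hupper : Tendsto (fun n : ℕ => x * (Real.log (c * n) / (c * n))) atTop (nhds (x * 0)) := by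
      exact (Real.isLittleO_log_id_atTop.tendsto_div_nhds_zero.comp hcn).const_mul x
    rw [mul_zero] at hupper
    refine tendsto_of_tendsto_of_tendsto_of_le_of_le' tendsto_const_nhds hupper ?_ ?_
    · filter_upwards [eventually_ge_atTop 1] with n hn1
      have hrpos := (hr n hn1).1
      have hn0 : (0:ℝ) < n := by exact_mod_cast hn1
      positivity
    · filter_upwards [hub, eventually_ge_atTop 1] with n hubn hn1
      have hrpos := (hr n hn1).1
      have hn0 : (0:ℝ) < n := by exact_mod_cast hn1
      have hcn0 : (0:ℝ) < c * n := by positivity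
      rw [mul_div_assoc]
      gcongr
  -- the key identity
  have hid : ∀ᶠ n : ℕ in atTop,
      r n = Real.log c + Real.log n - Real.log (r n) + Real.log (1 - x * r n / (c * n)) := by
    filter_upwards [eventually_ge_atTop 1] with n hn1
    have hrpos := (hr n hn1).1
    have he := heq n hn1
    have hn0 : (0:ℝ) < n := by exact_mod_cast hn1
    have hcn0 : (0:ℝ) < c * n := by positivity
    have hexp : Real.exp (r n) = c * n / r n - x := by
      field_simp
      nlinarith [he]
    have hpos1 : 0 < 1 - x * r n / (c * n) := by
      have hkey : 1 - x * r n / (c * n) = r n * Real.exp (r n) / (c * n) := by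
        field_simp
        nlinarith [he, Real.exp_pos (r n)]
      rw [hkey]
      positivity
    have hfact : Real.exp (r n) = (c * n / r n) * (1 - x * r n / (c * n)) := by
      rw [hexp]; field_simp
    have hthis := congrArg Real.log hfact
    rw [Real.log_exp] at hthis
    conv_lhs => rw [hthis]
    rw [Real.log_mul (by positivity) (ne_of_gt hpos1),
      Real.log_div (by positivity) (ne_of_gt hrpos), Real.log_mul (ne_of_gt hc) (ne_of_gt hn0)]
  -- log (r n) / log n → 0
  have hlr : Tendsto (fun n : ℕ => Real.log (r n) / Real.log n) atTop (nhds 0) := by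
    have hupper : Tendsto (fun n : ℕ => Real.log (Real.log c + Real.log n) / Real.log n)
        atTop (nhds 0) := (aux_log_add_div (Real.log c)).comp hlogn
    refine tendsto_of_tendsto_of_tendsto_of_le_of_le' tendsto_const_nhds hupper ?_ ?_
    · filter_upwards [hlb, hlogn.eventually_gt_atTop 0] with n h1 h2
      have : 0 ≤ Real.log (r n) := Real.log_nonneg h1
      positivity
    · filter_upwards [hlb, hub, hlogn.eventually_gt_atTop 0, eventually_ge_atTop 1]
        with n h1 h2 h3 hn1
      have hn0 : (0:ℝ) < n := by exact_mod_cast hn1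
      have hlcn : Real.log (c * n) = Real.log c + Real.log n :=
        Real.log_mul (ne_of_gt hc) (ne_of_gt hn0)
      have : Real.log (r n) ≤ Real.log (Real.log c + Real.log n) := by
        rw [← hlcn]
        exact Real.log_le_log (by linarith) h2
      exact (div_le_div_iff_of_pos_right h3).mpr this
  -- r n / log n → 1
  have h1eps : Tendsto (fun n : ℕ => Real.log (1 - x * r n / (c * n))) atTop (nhds 0) := by
    have : Tendsto (fun n : ℕ => (1:ℝ) - x * r n / (c * n)) atTop (nhds (1 - 0)) :=
      tendsto_const_nhds.sub heps
    rw [sub_zero] at this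
    have := this.log one_ne_zero
    rwa [Real.log_one] at this
  have hratio : Tendsto (fun n : ℕ => r n / Real.log n) atTop (nhds 1) := by
    have hT : Tendsto (fun n : ℕ => Real.log c / Real.log n + 1 - Real.log (r n) / Real.log n
        + Real.log (1 - x * r n / (c * n)) / Real.log n) atTop (nhds (0 + 1 - 0 + 0)) := by
      exact (((tendsto_const_nhds.div_atTop hlogn).add tendsto_const_nhds).sub hlr).add
        (h1eps.div_atTop hlogn)
    norm_num at hT
    refine hT.congr' ?_
    filter_upwards [hid, hlogn.eventually_gt_atTop 0] with n hidn hln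
    have hln0 : Real.log n ≠ 0 := ne_of_gt hln
    conv_rhs => rw [hidn]
    field_simp
  -- final assembly
  have hfin : Tendsto (fun n : ℕ => Real.log c - Real.log (r n / Real.log n)
      + Real.log (1 - x * r n / (c * n))) atTop (nhds (Real.log c - 0 + 0)) := by
    have hl1 : Tendsto (fun n : ℕ => Real.log (r n / Real.log n)) atTop (nhds 0) := by
      have := hratio.log one_ne_zero
      rwa [Real.log_one] at this
    exact (tendsto_const_nhds.sub hl1).add h1eps
  norm_num at hfin
  refine hfin.congr' ?_
  filter_upwards [hid, hlb, hlogn.eventually_gt_atTop 0] with n hidn h1 hln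
  have hrpos : (0:ℝ) < r n := lt_of_lt_of_le one_pos h1
  rw [Real.log_div (ne_of_gt hrpos) (ne_of_gt hln)]
  conv_rhs => rw [hidn]
  ring
end

section
/- Let x be a real number with x > 1, for each positive integer n let r(n) be the unique positive real solution of t(e^t + x) = 2 n x log x, and set λ_0(n) = x e^{−r(n)}. Then (2 n log x / log n) · λ_0(n) → 1 as n → ∞; that is, λ_0(n) is asymptotic to log n/(2 n log x). -/
open Filter

/-- For a real `x > 1`, let `r(n)` be the unique positive real solution of
`t(e^t + x) = 2 n x log x`, and set `λ₀(n) = x e^{−r(n)}`. Then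
`(2 n log x / log n) · λ₀(n) → 1` as `n → ∞`; that is, `λ₀(n) ∼ log n/(2 n log x)`. -/
theorem lambda_asymptotics (x : ℝ) (hx : 1 < x) (r : ℕ → ℝ)
    (hr : ∀ n : ℕ, 1 ≤ n → 0 < r n ∧ r n * (Real.exp (r n) + x) = 2 * n * x * Real.log x) :
    Tendsto (fun n : ℕ => (2 * n * Real.log x / Real.log n) * (x * Real.exp (-(r n)))) atTop
      (nhds 1) := by
  have hx0 : (0:ℝ) < x := zero_lt_one.trans hx
  have hlx : 0 < Real.log x := Real.log_pos hx
  have hnat : Tendsto (fun n : ℕ => (n:ℝ)) atTop atTop := tendsto_natCast_atTop_atTop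
  have hlog : Tendsto (fun n : ℕ => Real.log n) atTop atTop :=
    Real.tendsto_log_atTop.comp hnat
  -- key identity
  have key : ∀ n : ℕ, 1 ≤ n → r n * Real.exp (r n) = x * (2 * n * Real.log x - r n) := by
    intro n hn
    have h2 := (hr n hn).2
    nlinarith [h2]
  have hrlt : ∀ n : ℕ, 1 ≤ n → r n < 2 * n * Real.log x := by
    intro n hn
    have hk := key n hn
    have h1 := (hr n hn).1
    nlinarith [Real.exp_pos (r n), mul_pos h1 (Real.exp_pos (r n))]
  -- upper bound part
  have hupp : ∀ b : ℝ, 1 < b → ∀ᶠ n : ℕ in atTop, r n / Real.log n < b := by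
    intro b hb
    have h1 : ∀ᶠ n : ℕ in atTop, 2 * x * Real.log x < b * Real.log n :=
      (hlog.const_mul_atTop (by linarith : (0:ℝ) < b)).eventually_gt_atTop _
    filter_upwards [h1, hlog.eventually_gt_atTop 0, eventually_ge_atTop 1] with n hcb hln hn1
    rw [div_lt_iff₀ hln]
    by_contra hcon
    push_neg at hcon
    have hrn := hr n hn1
    have npos : (0:ℝ) < n := by exact_mod_cast Nat.lt_of_lt_of_le Nat.zero_lt_one hn1
    have hlen : Real.log n ≤ r n := by nlinarith
    have hle : (n:ℝ) ≤ Real.exp (r n) := by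
      rw [← Real.exp_log npos]
      exact Real.exp_le_exp.2 hlen
    have hmul : b * Real.log n * n ≤ r n * Real.exp (r n) :=
      mul_le_mul hcon hle npos.le hrn.1.le
    nlinarith [hrn.2, mul_pos hrn.1 hx0, mul_lt_mul_of_pos_right hcb npos]
  -- lower bound part
  have hlow : ∀ b : ℝ, b < 1 → ∀ᶠ n : ℕ in atTop, b < r n / Real.log n := by
    intro b hb
    rcases le_or_gt b 0 with hb0 | hb0
    · filter_upwards [hlog.eventually_gt_atTop 0, eventually_ge_atTop 1] with n hln hn1
      exact lt_of_le_of_lt hb0 (div_pos (hr n hn1).1 hln)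
    · have h1 : Tendsto (fun y : ℝ => Real.log y / y ^ (1 - b)) atTop (nhds 0) :=
        (isLittleO_log_rpow_atTop (by linarith)).tendsto_div_nhds_zero
      have h2 : Tendsto (fun y : ℝ => Real.log y / y) atTop (nhds 0) :=
        Real.isLittleO_log_id_atTop.tendsto_div_nhds_zero
      have hT : Tendsto (fun y : ℝ => b * (Real.log y / y ^ (1 - b)) +
          b * x * (Real.log y / y)) atTop (nhds 0) := by
        have := (h1.const_mul b).add (h2.const_mul (b * x))
        simpa using this
      have hT2 : Tendsto (fun n : ℕ =>
          b * Real.log n * (Real.exp (b * Real.log n) + x) / n) atTop (nhds 0) := by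
        apply (hT.comp hnat).congr'
        filter_upwards [hnat.eventually_gt_atTop 0] with n hn
        have hyb : Real.exp (b * Real.log (n:ℝ)) = (n:ℝ) ^ b := by
          rw [Real.rpow_def_of_pos hn, mul_comm]
        have h1b : (n:ℝ) ^ (1 - b) = (n:ℝ) ^ (1:ℝ) / (n:ℝ) ^ b := Real.rpow_sub hn 1 b
        have hb0' : (0:ℝ) < (n:ℝ) ^ b := Real.rpow_pos_of_pos hn b
        rw [Real.rpow_one] at h1b
        simp only [Function.comp_apply, hyb, h1b]
        field_simp
      have h3 : ∀ᶠ n : ℕ in atTop,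
          b * Real.log n * (Real.exp (b * Real.log n) + x) < 2 * n * x * Real.log x := by
        have hc : (0:ℝ) < 2 * x * Real.log x := by positivity
        filter_upwards [hT2.eventually_lt_const hc, hnat.eventually_gt_atTop 0] with n hlt hn
        rw [div_lt_iff₀ hn] at hlt
        nlinarith
      filter_upwards [h3, hlog.eventually_gt_atTop 0, eventually_ge_atTop 1] with n h3n hln hn1
      rw [lt_div_iff₀ hln]
      by_contra hcon
      push_neg at hcon
      have hrn := hr n hn1
      have hexp : Real.exp (r n) ≤ Real.exp (b * Real.log n) := Real.exp_le_exp.2 hcon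
      have hm : r n * (Real.exp (r n) + x) ≤
          b * Real.log n * (Real.exp (b * Real.log n) + x) :=
        mul_le_mul hcon (by linarith) (by positivity) (by positivity)
      linarith [hrn.2]
  have hA : Tendsto (fun n : ℕ => r n / Real.log n) atTop (nhds 1) :=
    tendsto_order.2 ⟨fun b hb => hlow b hb, fun b hb => hupp b hb⟩
  -- r n < 2 log n eventually
  have hub2 : ∀ᶠ n : ℕ in atTop, r n < 2 * Real.log n := by
    filter_upwards [hupp 2 one_lt_two, hlog.eventually_gt_atTop 0] with n h hln
    rw [div_lt_iff₀ hln] at h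
    linarith
  have hB : Tendsto (fun n : ℕ => r n / (2 * n * Real.log x)) atTop (nhds 0) := by
    apply squeeze_zero' (g := fun n : ℕ => 2 * Real.log n / (2 * n * Real.log x))
    · filter_upwards [eventually_ge_atTop 1] with n hn1
      have npos : (0:ℝ) < n := by exact_mod_cast Nat.lt_of_lt_of_le Nat.zero_lt_one hn1
      exact div_nonneg (hr n hn1).1.le (by positivity)
    · filter_upwards [hub2, eventually_ge_atTop 1] with n h hn1
      have npos : (0:ℝ) < n := by exact_mod_cast Nat.lt_of_lt_of_le Nat.zero_lt_one hn1
      exact div_le_div_of_nonneg_right h.le (by positivity) |>.trans_eq rfl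
    · have h2' : Tendsto (fun n : ℕ => Real.log n / (n:ℝ)) atTop (nhds 0) := by
        have := (Real.isLittleO_log_id_atTop.tendsto_div_nhds_zero).comp hnat
        exact this
      have hg : Tendsto (fun n : ℕ => Real.log n / n * (Real.log x)⁻¹) atTop (nhds 0) := by
        simpa using h2'.mul_const (Real.log x)⁻¹
      apply hg.congr'
      filter_upwards [hnat.eventually_gt_atTop 0] with n hn
      field_simp
  have hD : Tendsto (fun n : ℕ => (1 - r n / (2 * n * Real.log x))⁻¹) atTop (nhds 1) := by
    have hC : Tendsto (fun n : ℕ => 1 - r n / (2 * n * Real.log x)) atTop (nhds 1) := by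
      simpa using tendsto_const_nhds.sub hB
    simpa using hC.inv₀ one_ne_zero
  have hfin := hA.mul hD
  rw [mul_one] at hfin
  apply hfin.congr'
  filter_upwards [hlog.eventually_gt_atTop 0, eventually_ge_atTop 1] with n hln hn1
  have hr0 := (hr n hn1).1
  have hlt := hrlt n hn1
  have hk := key n hn1
  have npos : (0:ℝ) < n := by exact_mod_cast Nat.lt_of_lt_of_le Nat.zero_lt_one hn1
  have he : Real.exp (r n) = x * (2 * n * Real.log x - r n) / r n := by
    rw [eq_div_iff hr0.ne']
    linarith [hk]
  rw [Real.exp_neg, he]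
  have hsub : (0:ℝ) < 2 * n * Real.log x - r n := by linarith
  have hDn : (0:ℝ) < 2 * (n:ℝ) * Real.log x := by positivity
  field_simp
end

section
/- Let x be a real number with x > 1, for each positive integer n let r(n) be the unique positive real solution of t(e^t + x) = 2 n x log x, and set λ_0(n) = x e^{−r(n)} and ω_0(n) = 2 n λ_0(n) log x/(1 + λ_0(n))². Then ω_0(n)/log n → 1 as n → ∞; that is, ω_0(n) is asymptotic to log n. -/
open Filter

/-- For a real `x > 1`, let `r(n)` be the unique positive real solution of
`t(e^t + x) = 2 n x log x`, and set `λ₀(n) = x e^{−r(n)}`,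
`ω₀(n) = 2 n λ₀(n) log x/(1 + λ₀(n))²`. Then `ω₀(n)/log n → 1` as `n → ∞`;
that is, `ω₀(n) ∼ log n`. -/
theorem omega_asymptotics (x : ℝ) (hx : 1 < x) (r : ℕ → ℝ)
    (hr : ∀ n : ℕ, 1 ≤ n → 0 < r n ∧ r n * (Real.exp (r n) + x) = 2 * n * x * Real.log x) :
    Tendsto (fun n : ℕ =>
        (2 * n * (x * Real.exp (-(r n))) * Real.log x / (1 + x * Real.exp (-(r n))) ^ 2) /
          Real.log n) atTop (nhds 1) := by
  have hx0 : (0:ℝ) < x := lt_trans one_pos hx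
  have hlx : 0 < Real.log x := Real.log_pos hx
  set C : ℝ := 2 * x * Real.log x with hCdef
  have hC : 0 < C := by positivity
  have heq : ∀ n : ℕ, 1 ≤ n → r n * (Real.exp (r n) + x) = C * n := by
    intro n hn; rw [(hr n hn).2]; ring
  have hlogn : Tendsto (fun n : ℕ => Real.log n) atTop atTop :=
    Real.tendsto_log_atTop.comp tendsto_natCast_atTop_atTop
  -- Step 1 : r tends to infinity
  have hrlow : ∀ᶠ n : ℕ in atTop,
      (Real.log C + Real.log n - Real.log (1 + x)) / 2 ≤ r n := by
    filter_upwards [eventually_ge_atTop 1] with n hn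
    have hrn := (hr n hn).1
    have hE : (1:ℝ) ≤ Real.exp (r n) := Real.one_le_exp hrn.le
    have h1 : r n ≤ Real.exp (r n) := by
      have := Real.add_one_le_exp (r n); linarith
    have h2 : Real.exp (r n) + x ≤ Real.exp (r n) * (1 + x) := by nlinarith
    have h3 : C * n ≤ Real.exp (2 * r n) * (1 + x) := by
      have := heq n hn
      have h4 : r n * (Real.exp (r n) + x) ≤ Real.exp (r n) * (Real.exp (r n) * (1 + x)) := by
        nlinarith
      rw [two_mul, Real.exp_add]; linarith
    have hn0 : (0:ℝ) < (n:ℝ) := by exact_mod_cast hn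
    have h5 : Real.log (C * n) ≤ 2 * r n + Real.log (1 + x) := by
      calc Real.log (C * n) ≤ Real.log (Real.exp (2 * r n) * (1 + x)) := by
            apply Real.log_le_log (by positivity) h3
        _ = 2 * r n + Real.log (1 + x) := by
            rw [Real.log_mul (Real.exp_ne_zero _) (by positivity), Real.log_exp]
    rw [Real.log_mul hC.ne' hn0.ne'] at h5
    linarith
  have hrtop : Tendsto r atTop atTop := by
    apply tendsto_atTop_mono' atTop hrlow
    apply Tendsto.atTop_div_const two_pos
    have : Tendsto (fun n : ℕ => Real.log n + (Real.log C - Real.log (1 + x))) atTop atTop :=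
      tendsto_atTop_add_const_right _ _ hlogn
    exact this.congr (fun n => by ring)
  -- Step 2 : eventual upper bound  r n ≤ log C + log n
  have hup : ∀ᶠ n : ℕ in atTop, r n ≤ Real.log C + Real.log n := by
    filter_upwards [eventually_ge_atTop 1, hrtop.eventually_ge_atTop 1] with n hn hr1
    have hrn := (hr n hn).1
    have hn0 : (0:ℝ) < (n:ℝ) := by exact_mod_cast hn
    have h1 : Real.exp (r n) ≤ C * n := by
      have h2 := heq n hn
      nlinarith [Real.exp_pos (r n)]
    calc r n = Real.log (Real.exp (r n)) := (Real.log_exp _).symm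
      _ ≤ Real.log (C * n) := Real.log_le_log (Real.exp_pos _) h1
      _ = Real.log C + Real.log n := Real.log_mul hC.ne' hn0.ne'
  -- helper: log n / n → 0
  have hlogdiv : Tendsto (fun n : ℕ => Real.log n / (n : ℝ)) atTop (nhds 0) :=
    (Real.isLittleO_log_id_atTop.tendsto_div_nhds_zero).comp tendsto_natCast_atTop_atTop
  have hinvn : Tendsto (fun n : ℕ => ((n : ℝ))⁻¹) atTop (nhds 0) :=
    tendsto_inv_atTop_zero.comp tendsto_natCast_atTop_atTop
  -- Step 3 : eventually  x * (log C + log n) ≤ C * n / 2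
  have hsmall : ∀ᶠ n : ℕ in atTop, x * (Real.log C + Real.log n) ≤ C * n / 2 := by
    have hten : Tendsto (fun n : ℕ =>
        (x * Real.log C) * ((n:ℝ))⁻¹ + x * (Real.log n / n)) atTop (nhds 0) := by
      have := (hinvn.const_mul (x * Real.log C)).add (hlogdiv.const_mul x)
      simpa using this
    have hev := hten.eventually (eventually_lt_nhds (show (0:ℝ) < C / 2 by positivity))
    filter_upwards [hev, eventually_ge_atTop 1] with n h1 hn
    have hn0 : (0:ℝ) < (n:ℝ) := by exact_mod_cast hn
    have h2 : (x * Real.log C) * ((n:ℝ))⁻¹ + x * (Real.log n / n)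
        = x * (Real.log C + Real.log n) / n := by field_simp
    rw [h2] at h1
    have := (div_lt_iff₀ hn0).mp h1
    calc x * (Real.log C + Real.log n) ≤ C / 2 * n := this.le
      _ = C * n / 2 := by ring
  -- Step 4 : refined lower bound
  have hlow : ∀ᶠ n : ℕ in atTop,
      Real.log C + Real.log n - Real.log 2 - Real.log (r n) ≤ r n := by
    filter_upwards [eventually_ge_atTop 1, hup, hsmall, hrtop.eventually_ge_atTop 1]
      with n hn hu hs hr1
    have hrn := (hr n hn).1
    have hn0 : (0:ℝ) < (n:ℝ) := by exact_mod_cast hn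
    have h1 : r n * x ≤ x * (Real.log C + Real.log n) := by nlinarith
    have h2 : C * n / 2 ≤ r n * Real.exp (r n) := by
      have := heq n hn; nlinarith
    have h3 : C * n / (2 * r n) ≤ Real.exp (r n) := by
      rw [div_le_iff₀ (by positivity)]
      calc C * n = (C * n / 2) * 2 := by ring
        _ ≤ r n * Real.exp (r n) * 2 := by nlinarith
        _ = Real.exp (r n) * (2 * r n) := by ring
    have h4 : Real.log (C * n / (2 * r n)) ≤ r n := by
      calc Real.log (C * n / (2 * r n)) ≤ Real.log (Real.exp (r n)) :=
            Real.log_le_log (by positivity) h3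
        _ = r n := Real.log_exp _
    rw [Real.log_div (by positivity) (by positivity), Real.log_mul hC.ne' hn0.ne',
      Real.log_mul two_ne_zero hrn.ne'] at h4
    linarith
  -- Step 5 : log (r n) / log n → 0
  have hgtop : Tendsto (fun n : ℕ => Real.log C + Real.log n) atTop atTop := by
    have := tendsto_atTop_add_const_right atTop (Real.log C) hlogn
    exact this.congr (fun n => by ring)
  have hloggg : Tendsto (fun n : ℕ =>
      Real.log (Real.log C + Real.log n) / (Real.log C + Real.log n)) atTop (nhds 0) :=
    (Real.isLittleO_log_id_atTop.tendsto_div_nhds_zero).comp hgtop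
  have hinvlog : Tendsto (fun n : ℕ => (Real.log n)⁻¹) atTop (nhds 0) :=
    tendsto_inv_atTop_zero.comp hlogn
  have hgdiv : Tendsto (fun n : ℕ => (Real.log C + Real.log n) / Real.log n) atTop (nhds 1) := by
    have h1 : Tendsto (fun n : ℕ => Real.log C * (Real.log n)⁻¹ + 1) atTop (nhds 1) := by
      have := (hinvlog.const_mul (Real.log C)).add
        (tendsto_const_nhds : Tendsto (fun _ : ℕ => (1:ℝ)) atTop (nhds 1))
      simpa using this
    apply h1.congr'
    filter_upwards [hlogn.eventually_gt_atTop 0] with n hl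
    field_simp
  have hlogg_div : Tendsto (fun n : ℕ =>
      Real.log (Real.log C + Real.log n) / Real.log n) atTop (nhds 0) := by
    have h1 := hloggg.mul hgdiv
    rw [zero_mul] at h1
    apply h1.congr'
    filter_upwards [hgtop.eventually_gt_atTop 0] with n hg
    exact div_mul_div_cancel₀ hg.ne'
  have hlogr_div : Tendsto (fun n : ℕ => Real.log (r n) / Real.log n) atTop (nhds 0) := by
    apply squeeze_zero'
    · filter_upwards [hrtop.eventually_ge_atTop 1, hlogn.eventually_gt_atTop 0] with n h1 h2
      exact div_nonneg (Real.log_nonneg h1) h2.le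
    · filter_upwards [hup, hrtop.eventually_ge_atTop 1, hlogn.eventually_gt_atTop 0]
        with n hu h1 h2
      exact div_le_div_of_nonneg_right (Real.log_le_log (by linarith) hu) h2.le
    · exact hlogg_div
  -- Step 6 : r n / log n → 1
  have hrdiv : Tendsto (fun n : ℕ => r n / Real.log n) atTop (nhds 1) := by
    have hL : Tendsto (fun n : ℕ =>
        (Real.log C - Real.log 2) * (Real.log n)⁻¹ + 1 - Real.log (r n) / Real.log n)
        atTop (nhds 1) := by
      have := ((hinvlog.const_mul (Real.log C - Real.log 2)).add
        (tendsto_const_nhds : Tendsto (fun _ : ℕ => (1:ℝ)) atTop (nhds 1))).sub hlogr_div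
      simpa using this
    have hU : Tendsto (fun n : ℕ => Real.log C * (Real.log n)⁻¹ + 1) atTop (nhds 1) := by
      have := (hinvlog.const_mul (Real.log C)).add
        (tendsto_const_nhds : Tendsto (fun _ : ℕ => (1:ℝ)) atTop (nhds 1))
      simpa using this
    apply tendsto_of_tendsto_of_tendsto_of_le_of_le' hL hU
    · filter_upwards [hlow, hlogn.eventually_gt_atTop 0] with n hl h2
      have h3 : (Real.log C + Real.log n - Real.log 2 - Real.log (r n)) / Real.log n
          ≤ r n / Real.log n := div_le_div_of_nonneg_right hl h2.le
      calc (Real.log C - Real.log 2) * (Real.log n)⁻¹ + 1 - Real.log (r n) / Real.log n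
          = (Real.log C + Real.log n - Real.log 2 - Real.log (r n)) / Real.log n := by
            field_simp; ring
        _ ≤ r n / Real.log n := h3
    · filter_upwards [hup, hlogn.eventually_gt_atTop 0] with n hu h2
      calc r n / Real.log n ≤ (Real.log C + Real.log n) / Real.log n :=
            div_le_div_of_nonneg_right hu h2.le
        _ = Real.log C * (Real.log n)⁻¹ + 1 := by field_simp
  -- Step 7 : λ → 0 and conclusion
  have hlam : Tendsto (fun n : ℕ => x * Real.exp (-(r n))) atTop (nhds 0) := by
    have := (Real.tendsto_exp_neg_atTop_nhds_zero.comp hrtop).const_mul x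
    simpa using this
  have hinvlam : Tendsto (fun n : ℕ => (1 + x * Real.exp (-(r n)))⁻¹) atTop (nhds 1) := by
    have h1 : Tendsto (fun n : ℕ => 1 + x * Real.exp (-(r n))) atTop (nhds 1) := by
      have := (tendsto_const_nhds : Tendsto (fun _ : ℕ => (1:ℝ)) atTop (nhds 1)).add hlam
      simpa using this
    have := h1.inv₀ one_ne_zero
    simpa using this
  have hmain := hrdiv.mul hinvlam
  rw [mul_one] at hmain
  apply hmain.congr'
  filter_upwards [eventually_ge_atTop 1] with n hn
  have hrn := (hr n hn).1
  have h2 := (hr n hn).2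
  set lam := x * Real.exp (-(r n)) with hlamdef
  have hlp : 0 < 1 + lam := by positivity
  have key : 2 * n * lam * Real.log x = r n * (1 + lam) := by
    have hE : Real.exp (r n) ≠ 0 := Real.exp_ne_zero _
    rw [hlamdef, Real.exp_neg]
    field_simp
    nlinarith [h2]
  rw [show r n / Real.log n * (1 + lam)⁻¹ = r n / (1 + lam) / Real.log n from by ring,
    key, sq, mul_div_mul_right _ _ hlp.ne']
end

section
/- Let x be a real number with x > 1 and for each positive integer n let r(n) be the unique positive real solution of t(e^t + x) = 2 n x log x. Then n·log(1 + x e^{−r(n)}) − r(n)/(2 log x) → 0 as n → ∞. Consequently, with ψ(s) = s²/(4n log x) − log(1 + x e^{is}) the phase function of the integral representation of ℘_n(x^{-2}), the exponent at the saddle point i r(n) satisfies −n ψ(i r(n)) = (r(n)² + 2 r(n))/(4 log x) + o(1) as n → ∞, which shows that the leading term of the steepest-descent expansion agrees with the asymptotic formula of Gawronski and Neuschel. -/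
open Filter

/-- For a real `x > 1`, let `r(n)` be the unique positive real solution of
`t(e^t + x) = 2 n x log x`. Then `n·log(1 + x e^{−r(n)}) − r(n)/(2 log x) → 0` as `n → ∞`.
Consequently the exponent at the saddle point `i r(n)`, namely
`−n ψ(i r(n)) = r(n)²/(4 log x) + n log(1 + x e^{−r(n)})`, satisfies
`−n ψ(i r(n)) = (r(n)² + 2 r(n))/(4 log x) + o(1)` as `n → ∞`. -/
theorem exponent_asymptotics (x : ℝ) (hx : 1 < x) (r : ℕ → ℝ)
    (hr : ∀ n : ℕ, 1 ≤ n → 0 < r n ∧ r n * (Real.exp (r n) + x) = 2 * n * x * Real.log x) :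
    Tendsto (fun n : ℕ =>
        n * Real.log (1 + x * Real.exp (-(r n))) - r n / (2 * Real.log x)) atTop (nhds 0) ∧
    Tendsto (fun n : ℕ =>
        ((r n) ^ 2 / (4 * Real.log x) + n * Real.log (1 + x * Real.exp (-(r n)))) -
          ((r n) ^ 2 + 2 * r n) / (4 * Real.log x)) atTop (nhds 0) := by
  have hL : 0 < Real.log x := Real.log_pos hx
  have hx0 : (0:ℝ) < x := lt_trans one_pos hx
  -- r tends to infinity
  have hrtop : Tendsto r atTop atTop := by
    rw [tendsto_atTop]
    intro b
    obtain ⟨N, hN⟩ := exists_nat_gt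
      ((max b 0) * (Real.exp (max b 0) + x) / (2 * x * Real.log x))
    filter_upwards [eventually_ge_atTop (max N 1)] with n hn
    have hn1 : 1 ≤ n := le_trans (le_max_right _ _) hn
    obtain ⟨hpos, heq⟩ := hr n hn1
    by_contra hb
    push_neg at hb
    have hrb : r n ≤ max b 0 := le_trans hb.le (le_max_left _ _)
    have h1 : r n * (Real.exp (r n) + x) ≤ (max b 0) * (Real.exp (max b 0) + x) := by
      have he : Real.exp (r n) ≤ Real.exp (max b 0) := Real.exp_le_exp.mpr hrb
      have h0 : (0:ℝ) ≤ max b 0 := le_max_right _ _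
      nlinarith [Real.exp_pos (r n)]
    have h2 : (n : ℝ) ≤ (max b 0) * (Real.exp (max b 0) + x) / (2 * x * Real.log x) := by
      rw [le_div_iff₀ (by positivity)]
      nlinarith
    have h3 : (N : ℝ) ≤ (n : ℝ) := by
      exact_mod_cast le_trans (le_max_left N 1) hn
    linarith
  have h0 : Tendsto (fun n : ℕ => r n * Real.exp (-(r n))) atTop (nhds 0) := by
    have := (Real.tendsto_pow_mul_exp_neg_atTop_nhds_zero 1).comp hrtop
    simpa [Function.comp_def] using this
  -- the first limit
  have hmain : Tendsto (fun n : ℕ =>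
      n * Real.log (1 + x * Real.exp (-(r n))) - r n / (2 * Real.log x)) atTop (nhds 0) := by
    have hup : Tendsto (fun n : ℕ => (x / (2 * Real.log x)) * (r n * Real.exp (-(r n))))
        atTop (nhds 0) := by
      simpa using h0.const_mul (x / (2 * Real.log x))
    refine tendsto_of_tendsto_of_tendsto_of_le_of_le' tendsto_const_nhds hup ?_ ?_
    · -- lower bound : 0 ≤ f n
      filter_upwards [eventually_ge_atTop 1] with n hn
      obtain ⟨hpos, heq⟩ := hr n hn
      set t := r n with ht
      set u := x * Real.exp (-t) with hu
      have hu0 : 0 < u := by positivity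
      have het : (0:ℝ) < Real.exp t := Real.exp_pos t
      have hee : Real.exp t * Real.exp (-t) = 1 := by
        rw [← Real.exp_add]; simp
      -- log (1+u) ≥ x / (exp t + x)
      have hinv : Real.log ((1+u)⁻¹) ≤ (1+u)⁻¹ - 1 :=
        Real.log_le_sub_one_of_pos (by positivity)
      have hlog_ge : 1 - (1+u)⁻¹ ≤ Real.log (1+u) := by
        rw [Real.log_inv] at hinv; linarith
      have hux : u * Real.exp t = x := by
        rw [hu]; nlinarith
      have hfrac : x / (Real.exp t + x) = 1 - (1+u)⁻¹ := by
        have h1 : (1:ℝ) - (1+u)⁻¹ = u / (1+u) := by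
          field_simp
          ring
        rw [h1, div_eq_div_iff (by positivity) (by positivity)]
        nlinarith
      have key1 : x ≤ (Real.exp t + x) * Real.log (1+u) := by
        have h := hlog_ge
        rw [← hfrac, div_le_iff₀ (by positivity)] at h
        linarith
      have hn_eq : 2 * x * Real.log x * (n:ℝ) = t * (Real.exp t + x) := by
        linarith [heq]
      have h3 : t * (Real.exp t + x) * Real.log (1+u) =
          2 * x * Real.log x * (n:ℝ) * Real.log (1+u) := by
        rw [hn_eq]
      have h4 : t * x ≤ t * ((Real.exp t + x) * Real.log (1+u)) :=
        mul_le_mul_of_nonneg_left key1 hpos.le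
      have h5 : t ≤ (n:ℝ) * Real.log (1+u) * (2 * Real.log x) := by
        nlinarith
      have : t / (2 * Real.log x) ≤ (n:ℝ) * Real.log (1+u) := by
        rw [div_le_iff₀ (by positivity)]
        exact h5
      linarith
    · -- upper bound
      filter_upwards [eventually_ge_atTop 1] with n hn
      obtain ⟨hpos, heq⟩ := hr n hn
      set t := r n with ht
      set u := x * Real.exp (-t) with hu
      have hu0 : 0 < u := by positivity
      have het : (0:ℝ) < Real.exp t := Real.exp_pos t
      have hee : Real.exp t * Real.exp (-t) = 1 := by
        rw [← Real.exp_add]; simp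
      have hlog_le : Real.log (1+u) ≤ u := by
        have := Real.log_le_sub_one_of_pos (show (0:ℝ) < 1+u by positivity)
        linarith
      have key2 : (Real.exp t + x) * Real.log (1+u) ≤ x * (1+u) := by
        have h1 : (Real.exp t + x) * Real.log (1+u) ≤ (Real.exp t + x) * u :=
          mul_le_mul_of_nonneg_left hlog_le (by positivity)
        have h2 : (Real.exp t + x) * u = x * (1+u) := by
          rw [hu]; nlinarith
        linarith
      have hn_eq : 2 * x * Real.log x * (n:ℝ) = t * (Real.exp t + x) := by
        linarith [heq]
      have h3 : t * (Real.exp t + x) * Real.log (1+u) =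
          2 * x * Real.log x * (n:ℝ) * Real.log (1+u) := by
        rw [hn_eq]
      have h4 : t * ((Real.exp t + x) * Real.log (1+u)) ≤ t * (x * (1+u)) :=
        mul_le_mul_of_nonneg_left key2 hpos.le
      have h5 : (n:ℝ) * Real.log (1+u) * (2 * Real.log x) ≤ t * (1+u) := by
        nlinarith
      have h6 : (n:ℝ) * Real.log (1+u) ≤ t * (1+u) / (2 * Real.log x) := by
        rw [le_div_iff₀ (by positivity)]
        exact h5
      have h7 : t * (1+u) / (2 * Real.log x) =
          t / (2 * Real.log x) + (x / (2 * Real.log x)) * (t * Real.exp (-t)) := by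
        rw [hu]; field_simp
      linarith
  refine ⟨hmain, ?_⟩
  have hfun : (fun n : ℕ =>
        ((r n) ^ 2 / (4 * Real.log x) + n * Real.log (1 + x * Real.exp (-(r n)))) -
          ((r n) ^ 2 + 2 * r n) / (4 * Real.log x)) =
      (fun n : ℕ =>
        n * Real.log (1 + x * Real.exp (-(r n))) - r n / (2 * Real.log x)) := by
    funext n
    field_simp
    ring
  rw [hfun]
  exact hmain
end

section
/- Let x be a real number with x > 1, for each positive integer n let r(n) be the unique positive real solution of t(e^t + x) = 2 n x log x, and set λ_0(n) = x e^{−r(n)}, a_0(n) = (1 + λ_0(n))²/(4 n λ_0(n) log x), χ(n) = log n/(n λ_0(n)). Define the first steepest-descent coefficient c_{10}(n) = −Q_1(a_0(n), λ_0(n)) χ(n)/(6 (1 + 2 a_0(n))³), where Q_1(a, ξ) = P_{11}(ξ) − 3 a P_{12}(ξ) with P_{11}(ξ) = 1 + ξ + ξ² and P_{12}(ξ) = 1 − 4ξ + ξ². Then c_{10}(n) → −(1/3) log x as n → ∞. -/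
open Filter

/-- `P₁₁(ξ) = 1 + ξ + ξ²`. -/
def P11 (ξ : ℝ) : ℝ := 1 + ξ + ξ ^ 2

/-- `P₁₂(ξ) = 1 − 4ξ + ξ²`. -/
def P12 (ξ : ℝ) : ℝ := 1 - 4 * ξ + ξ ^ 2

/-- `Q₁(a, ξ) = P₁₁(ξ) − 3 a P₁₂(ξ)`. -/
def Q1 (a ξ : ℝ) : ℝ := P11 ξ - 3 * a * P12 ξ

/-- For a real `x > 1`, with `r(n)` the unique positive solution of `t(e^t + x) = 2 n x log x`,
`λ₀(n) = x e^{−r(n)}`, `a₀(n) = (1 + λ₀(n))²/(4 n λ₀(n) log x)`, `χ(n) = log n/(n λ₀(n))`, the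
first steepest-descent coefficient `c₁₀(n) = −Q₁(a₀(n), λ₀(n)) χ(n)/(6 (1 + 2 a₀(n))³)`
satisfies `c₁₀(n) → −(1/3) log x` as `n → ∞`. -/
theorem c10_limit (x : ℝ) (hx : 1 < x) (r : ℕ → ℝ)
    (hr : ∀ n : ℕ, 1 ≤ n → 0 < r n ∧ r n * (Real.exp (r n) + x) = 2 * n * x * Real.log x)
    (lam0 a0 chi c10 : ℕ → ℝ)
    (hlam : ∀ n : ℕ, lam0 n = x * Real.exp (-(r n)))
    (ha : ∀ n : ℕ, a0 n = (1 + lam0 n) ^ 2 / (4 * n * lam0 n * Real.log x))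
    (hchi : ∀ n : ℕ, chi n = Real.log n / (n * lam0 n))
    (hc : ∀ n : ℕ, c10 n = -(Q1 (a0 n) (lam0 n)) * chi n / (6 * (1 + 2 * a0 n) ^ 3)) :
    Tendsto c10 atTop (nhds (-(1 / 3) * Real.log x)) := by
  have hx0 : (0:ℝ) < x := lt_trans one_pos hx
  have hL : 0 < Real.log x := Real.log_pos hx
  set L := Real.log x with hLdef
  -- lam0 is positive
  have hlampos : ∀ n, 0 < lam0 n := fun n => by
    rw [hlam n]; positivity
  -- Step 1: r n → ∞
  have hrt : Tendsto r atTop atTop := by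
    rw [tendsto_atTop]
    intro M
    set C := max M 1 with hC
    have hC1 : (0:ℝ) < C := lt_of_lt_of_le one_pos (le_max_right _ _)
    have hMC : M ≤ C := le_max_left _ _
    have hbig : Tendsto (fun n : ℕ => (n:ℝ) * (2 * x * L)) atTop atTop :=
      tendsto_natCast_atTop_atTop.atTop_mul_const (by positivity)
    filter_upwards [hbig.eventually_gt_atTop (C * (Real.exp C + x)),
      eventually_ge_atTop 1] with n hn hn1
    obtain ⟨hpos, heq⟩ := hr n hn1
    by_contra hcon
    push_neg at hcon
    have hrC : r n ≤ C := le_trans hcon.le hMC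
    have hexp : Real.exp (r n) ≤ Real.exp C := Real.exp_le_exp.mpr hrC
    have : r n * (Real.exp (r n) + x) ≤ C * (Real.exp C + x) := by
      apply mul_le_mul hrC (by linarith) (by positivity) hC1.le
    have h2 : 2 * (n:ℝ) * x * L = (n:ℝ) * (2 * x * L) := by ring
    rw [heq, h2] at this
    linarith
  have hrpos : ∀ᶠ n in atTop, 0 < r n := hrt.eventually_gt_atTop 0
  -- lam0 → 0
  have hΛ : Tendsto lam0 atTop (nhds 0) := by
    have h1 : Tendsto (fun n => Real.exp (-(r n))) atTop (nhds 0) :=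
      Real.tendsto_exp_neg_atTop_nhds_zero.comp hrt
    have := h1.const_mul x
    simpa [hlam] using this.congr (fun n => (hlam n).symm)
  -- key identity: n * lam0 n * (2 L) = r n * (1 + lam0 n) for n ≥ 1
  have hkey : ∀ n : ℕ, 1 ≤ n → (n:ℝ) * lam0 n * (2 * L) = r n * (1 + lam0 n) := by
    intro n hn1
    obtain ⟨hpos, heq⟩ := hr n hn1
    have h1 : Real.exp (r n) * Real.exp (-(r n)) = 1 := by
      rw [← Real.exp_add]; simp
    rw [hlam n]
    linear_combination -Real.exp (-(r n)) * heq + r n * h1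
  -- a0 n = (1 + lam0 n) / (2 * r n) for n ≥ 1
  have ha' : ∀ n : ℕ, 1 ≤ n → a0 n = (1 + lam0 n) / (2 * r n) := by
    intro n hn1
    obtain ⟨hpos, _⟩ := hr n hn1
    have hnpos : (0:ℝ) < n := by exact_mod_cast hn1
    have hlp := hlampos n
    rw [ha n, div_eq_div_iff (by positivity) (by positivity)]
    linear_combination (-2) * (1 + lam0 n) * hkey n hn1
  -- a0 → 0
  have hA : Tendsto a0 atTop (nhds 0) := by
    have hnum : Tendsto (fun n => 1 + lam0 n) atTop (nhds (1 + 0)) :=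
      tendsto_const_nhds.add hΛ
    have h1 : Tendsto (fun n => (1 + lam0 n) / (2 * r n)) atTop (nhds 0) :=
      hnum.div_atTop (hrt.const_mul_atTop two_pos)
    apply h1.congr'
    filter_upwards [eventually_ge_atTop 1] with n hn1
    exact (ha' n hn1).symm
  -- log n / r n → 1
  have h1lam : ∀ᶠ n in atTop, (0:ℝ) < 1 + lam0 n := by
    filter_upwards with n; have := hlampos n; linarith
  have hlogn : ∀ᶠ n : ℕ in atTop,
      Real.log (n : ℝ) = Real.log (r n) + r n + Real.log (1 + lam0 n) - Real.log (2 * x * L) := by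
    filter_upwards [eventually_ge_atTop 1, hrpos] with n hn1 hpos
    obtain ⟨_, heq⟩ := hr n hn1
    have hlp := hlampos n
    have hsplit : Real.exp (r n) + x = Real.exp (r n) * (1 + lam0 n) := by
      rw [hlam n, mul_add, mul_one, ← mul_assoc, mul_comm (Real.exp (r n)) x,
        mul_assoc, ← Real.exp_add]
      simp
    have hn' : (n:ℝ) = r n * Real.exp (r n) * (1 + lam0 n) / (2 * x * L) := by
      rw [eq_div_iff (by positivity)]
      linear_combination -heq + r n * hsplit
    rw [hn', Real.log_div (by positivity) (by positivity),
      Real.log_mul (by positivity) (by positivity),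
      Real.log_mul (by positivity) (Real.exp_ne_zero _), Real.log_exp]
  have hlogr : Tendsto (fun n : ℕ => Real.log (r n) / r n) atTop (nhds 0) :=
    Real.isLittleO_log_id_atTop.tendsto_div_nhds_zero.comp hrt
  have hratio : Tendsto (fun n : ℕ => Real.log (n : ℝ) / r n) atTop (nhds 1) := by
    have hlog1 : Tendsto (fun n => Real.log (1 + lam0 n)) atTop (nhds 0) := by
      have : Tendsto (fun n => Real.log (1 + lam0 n)) atTop (nhds (Real.log (1 + 0))) :=
        (Real.continuousAt_log (by norm_num)).tendsto.comp (tendsto_const_nhds.add hΛ)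
      simpa using this
    have hinv : Tendsto (fun n => (r n)⁻¹) atTop (nhds 0) := hrt.inv_tendsto_atTop
    have hmain : Tendsto (fun n : ℕ => Real.log (r n) / r n + 1 + Real.log (1 + lam0 n) * (r n)⁻¹
        - Real.log (2 * x * L) * (r n)⁻¹) atTop (nhds (0 + 1 + 0 * 0 - Real.log (2 * x * L) * 0)) := by
      exact ((hlogr.add tendsto_const_nhds).add (hlog1.mul hinv)).sub
        (tendsto_const_nhds.mul hinv)
    have hmain' : Tendsto (fun n : ℕ => Real.log (r n) / r n + 1 + Real.log (1 + lam0 n) * (r n)⁻¹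
        - Real.log (2 * x * L) * (r n)⁻¹) atTop (nhds 1) := by
      convert hmain using 2 <;> ring
    apply hmain'.congr'
    filter_upwards [hlogn, hrpos] with n hlg hpos
    rw [hlg]
    field_simp
  -- chi → 2 L
  have hX : Tendsto chi atTop (nhds (2 * L)) := by
    have h1 : Tendsto (fun n : ℕ => (Real.log (n:ℝ) / r n) * (2 * L / (1 + lam0 n))) atTop
        (nhds (1 * (2 * L / (1 + 0)))) := by
      exact hratio.mul ((tendsto_const_nhds).div (tendsto_const_nhds.add hΛ) (by norm_num))
    have h1' : Tendsto (fun n : ℕ => (Real.log (n:ℝ) / r n) * (2 * L / (1 + lam0 n))) atTop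
        (nhds (2 * L)) := by
      convert h1 using 2 <;> norm_num
    apply h1'.congr'
    filter_upwards [eventually_ge_atTop 1, hrpos] with n hn1 hpos
    have hlp := hlampos n
    have hnl : (n:ℝ) * lam0 n = r n * (1 + lam0 n) / (2 * L) := by
      rw [eq_div_iff (by positivity)]; exact hkey n hn1
    rw [hchi n, hnl]
    have h1l : (0:ℝ) < 1 + lam0 n := by linarith
    field_simp
  -- final assembly
  have hQcont : Continuous (fun p : ℝ × ℝ => Q1 p.1 p.2) := by
    unfold Q1 P11 P12; fun_prop
  have hQ : Tendsto (fun n => Q1 (a0 n) (lam0 n)) atTop (nhds (Q1 0 0)) :=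
    (hQcont.tendsto (0, 0)).comp (hA.prodMk_nhds hΛ)
  have hden : Tendsto (fun n => 6 * (1 + 2 * a0 n) ^ 3) atTop (nhds (6 * (1 + 2 * 0) ^ 3)) := by
    apply Tendsto.const_mul
    exact ((tendsto_const_nhds.add (hA.const_mul 2)).pow 3)
  have hfin : Tendsto (fun n => -(Q1 (a0 n) (lam0 n)) * chi n / (6 * (1 + 2 * a0 n) ^ 3))
      atTop (nhds (-(Q1 0 0) * (2 * L) / (6 * (1 + 2 * 0) ^ 3))) :=
    (hQ.neg.mul hX).div hden (by norm_num)
  have heval : -(Q1 0 0) * (2 * L) / (6 * (1 + 2 * 0) ^ 3) = -(1/3) * L := by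
    norm_num [Q1, P11, P12]; ring
  rw [← heval]
  exact hfin.congr (fun n => (hc n).symm)
end

section
/- Let x be a real number with x > 1, for each positive integer n let r(n) be the unique positive real solution of t(e^t + x) = 2 n x log x, and set λ_0(n) = x e^{−r(n)}, a_0(n) = (1 + λ_0(n))²/(4 n λ_0(n) log x), χ(n) = log n/(n λ_0(n)). Define the third steepest-descent coefficient c_{30}(n) = Q_3(a_0(n), λ_0(n)) χ(n)³/(97200 (1 + 2 a_0(n))⁹), where Q_3(a, ξ) = P_{31}(ξ) + 27 a P_{32}(ξ) − 9 a² P_{33}(ξ) + 27 a³ P_{34}(ξ) − 432 a⁴ P_{35}(ξ) + 4320 a⁵ P_{36}(ξ) with P_{31}(ξ) = 139 + 417ξ + 402ξ² + 109ξ³ + 402ξ⁴ + 417ξ⁵ + 139ξ⁶, P_{32}(ξ) = 151 + 378ξ + 308ξ² + 56ξ³ + 308ξ⁴ + 378ξ⁵ + 151ξ⁶, P_{33}(ξ) = 9271 − 3497ξ − 10867ξ² + 766ξ³ − 10867ξ⁴ − 3497ξ⁵ + 9271ξ⁶, P_{34}(ξ) = 7349 − 48668ξ + 45007ξ² − 24056ξ³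 + 45007ξ⁴ − 48668ξ⁵ + 7349ξ⁶, P_{35}(ξ) = 203 − 5016ξ + 18729ξ² − 24392ξ³ + 18729ξ⁴ − 5016ξ⁵ + 203ξ⁶, P_{36}(ξ) = 1 − 120ξ + 1191ξ² − 2416ξ³ + 1191ξ⁴ − 120ξ⁵ + ξ⁶. Then c_{30}(n) → (139/12150) (log x)³ as n → ∞. -/
open Filter

/-- `P₃₁(ξ) = 139 + 417ξ + 402ξ² + 109ξ³ + 402ξ⁴ + 417ξ⁵ + 139ξ⁶`. -/
def P31 (ξ : ℝ) : ℝ :=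
  139 + 417 * ξ + 402 * ξ ^ 2 + 109 * ξ ^ 3 + 402 * ξ ^ 4 + 417 * ξ ^ 5 + 139 * ξ ^ 6

/-- `P₃₂(ξ) = 151 + 378ξ + 308ξ² + 56ξ³ + 308ξ⁴ + 378ξ⁵ + 151ξ⁶`. -/
def P32 (ξ : ℝ) : ℝ :=
  151 + 378 * ξ + 308 * ξ ^ 2 + 56 * ξ ^ 3 + 308 * ξ ^ 4 + 378 * ξ ^ 5 + 151 * ξ ^ 6

/-- `P₃₃(ξ) = 9271 − 3497ξ − 10867ξ² + 766ξ³ − 10867ξ⁴ − 3497ξ⁵ + 9271ξ⁶`. -/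
def P33 (ξ : ℝ) : ℝ :=
  9271 - 3497 * ξ - 10867 * ξ ^ 2 + 766 * ξ ^ 3 - 10867 * ξ ^ 4 - 3497 * ξ ^ 5 + 9271 * ξ ^ 6

/-- `P₃₄(ξ) = 7349 − 48668ξ + 45007ξ² − 24056ξ³ + 45007ξ⁴ − 48668ξ⁵ + 7349ξ⁶`. -/
def P34 (ξ : ℝ) : ℝ :=
  7349 - 48668 * ξ + 45007 * ξ ^ 2 - 24056 * ξ ^ 3 + 45007 * ξ ^ 4 - 48668 * ξ ^ 5 +
    7349 * ξ ^ 6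

/-- `P₃₅(ξ) = 203 − 5016ξ + 18729ξ² − 24392ξ³ + 18729ξ⁴ − 5016ξ⁵ + 203ξ⁶`. -/
def P35 (ξ : ℝ) : ℝ :=
  203 - 5016 * ξ + 18729 * ξ ^ 2 - 24392 * ξ ^ 3 + 18729 * ξ ^ 4 - 5016 * ξ ^ 5 + 203 * ξ ^ 6

/-- `P₃₆(ξ) = 1 − 120ξ + 1191ξ² − 2416ξ³ + 1191ξ⁴ − 120ξ⁵ + ξ⁶`. -/
def P36 (ξ : ℝ) : ℝ :=
  1 - 120 * ξ + 1191 * ξ ^ 2 - 2416 * ξ ^ 3 + 1191 * ξ ^ 4 - 120 * ξ ^ 5 + ξ ^ 6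

/-- `Q₃(a, ξ) = P₃₁(ξ) + 27 a P₃₂(ξ) − 9 a² P₃₃(ξ) + 27 a³ P₃₄(ξ) − 432 a⁴ P₃₅(ξ) + 4320 a⁵ P₃₆(ξ)`. -/
def Q3 (a ξ : ℝ) : ℝ :=
  P31 ξ + 27 * a * P32 ξ - 9 * a ^ 2 * P33 ξ + 27 * a ^ 3 * P34 ξ - 432 * a ^ 4 * P35 ξ +
    4320 * a ^ 5 * P36 ξ

/-- For a real `x > 1`, with `r(n)` the unique positive solution of `t(e^t + x) = 2 n x log x`,
`λ₀(n) = x e^{−r(n)}`, `a₀(n) = (1 + λ₀(n))²/(4 n λ₀(n) log x)`, `χ(n) = log n/(n λ₀(n))`, the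
third steepest-descent coefficient `c₃₀(n) = Q₃(a₀(n), λ₀(n)) χ(n)³/(97200 (1 + 2 a₀(n))⁹)`
satisfies `c₃₀(n) → (139/12150)(log x)³` as `n → ∞`. -/
theorem c30_limit (x : ℝ) (hx : 1 < x) (r : ℕ → ℝ)
    (hr : ∀ n : ℕ, 1 ≤ n → 0 < r n ∧ r n * (Real.exp (r n) + x) = 2 * n * x * Real.log x)
    (lam0 a0 chi c30 : ℕ → ℝ)
    (hlam : ∀ n : ℕ, lam0 n = x * Real.exp (-(r n)))
    (ha : ∀ n : ℕ, a0 n = (1 + lam0 n) ^ 2 / (4 * n * lam0 n * Real.log x))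
    (hchi : ∀ n : ℕ, chi n = Real.log n / (n * lam0 n))
    (hc : ∀ n : ℕ, c30 n = Q3 (a0 n) (lam0 n) * (chi n) ^ 3 / (97200 * (1 + 2 * a0 n) ^ 9)) :
    Tendsto c30 atTop (nhds ((139 / 12150) * (Real.log x) ^ 3)) := by
  have hx0 : (0:ℝ) < x := lt_trans one_pos hx
  set L := Real.log x with hLdef
  have hL : 0 < L := Real.log_pos hx
  have hlampos : ∀ n, 0 < lam0 n := by
    intro n; rw [hlam]; positivity
  -- r tends to infinity
  have hrtop : Tendsto r atTop atTop := by
    rw [tendsto_atTop]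
    intro M
    set M' := max M 1 with hM'def
    have hM' : (0:ℝ) < M' := lt_of_lt_of_le one_pos (le_max_right _ _)
    have hN : Tendsto (fun n : ℕ => 2 * (n:ℝ) * x * L) atTop atTop := by
      have h1 : Tendsto (fun n : ℕ => (n:ℝ)) atTop atTop := tendsto_natCast_atTop_atTop
      have h2 := h1.atTop_mul_const (by positivity : (0:ℝ) < 2 * x * L)
      refine h2.congr (fun n => by ring)
    filter_upwards [hN.eventually_gt_atTop (M' * (Real.exp M' + x)),
      eventually_ge_atTop 1] with n hn hn1
    obtain ⟨hrpos, heq⟩ := hr n hn1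
    by_contra h
    push_neg at h
    have hrM : r n ≤ M' := le_trans h.le (le_max_left _ _)
    have hle : r n * (Real.exp (r n) + x) ≤ M' * (Real.exp M' + x) := by
      have := Real.exp_le_exp.2 hrM
      have := (Real.exp_pos (r n)).le
      nlinarith
    rw [heq] at hle
    linarith
  -- lam0 tends to 0
  have hlam0 : Tendsto lam0 atTop (nhds 0) := by
    have h1 : Tendsto (fun n => x * Real.exp (-(r n))) atTop (nhds (x * 0)) := by
      exact (Real.tendsto_exp_neg_atTop_nhds_zero.comp hrtop).const_mul x
    rw [mul_zero] at h1
    exact h1.congr (fun n => (hlam n).symm)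
  -- key identity
  have hkey : ∀ n : ℕ, 1 ≤ n → (n:ℝ) * lam0 n = r n * (1 + lam0 n) / (2 * L) := by
    intro n hn
    obtain ⟨hrpos, heq⟩ := hr n hn
    have hE := Real.exp_pos (r n)
    rw [hlam, Real.exp_neg]
    field_simp
    nlinarith [heq]
  -- n * lam0 tends to infinity
  have hnlam : Tendsto (fun n : ℕ => (n:ℝ) * lam0 n) atTop atTop := by
    have h1 : Tendsto (fun n : ℕ => (1 + lam0 n) / (2 * L)) atTop (nhds (1 / (2 * L))) := by
      have h0 : Tendsto (fun n : ℕ => 1 + lam0 n) atTop (nhds (1 + 0)) :=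
        tendsto_const_nhds.add hlam0
      simpa using h0.div_const (2 * L)
    have h2 : Tendsto (fun n : ℕ => r n * ((1 + lam0 n) / (2 * L))) atTop atTop :=
      hrtop.atTop_mul_pos (by positivity) h1
    refine (h2.congr' ?_)
    filter_upwards [eventually_ge_atTop 1] with n hn
    rw [hkey n hn]; ring
  -- a0 tends to 0
  have ha0 : Tendsto a0 atTop (nhds 0) := by
    have hnum : Tendsto (fun n : ℕ => (1 + lam0 n) ^ 2) atTop (nhds 1) := by
      have h0 : Tendsto (fun n : ℕ => 1 + lam0 n) atTop (nhds (1 + 0)) :=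
        tendsto_const_nhds.add hlam0
      simpa using h0.pow 2
    have hden : Tendsto (fun n : ℕ => (n:ℝ) * lam0 n * (4 * L)) atTop atTop :=
      hnlam.atTop_mul_const (by positivity)
    have := hnum.div_atTop hden
    refine this.congr (fun n => ?_)
    rw [ha n]
    ring_nf
  -- log r / r tends to 0
  have hlogr : Tendsto (fun n : ℕ => Real.log (r n) / r n) atTop (nhds 0) :=
    (Real.isLittleO_log_id_atTop.tendsto_div_nhds_zero).comp hrtop
  -- chi tends to 2L
  have hchi2 : Tendsto chi atTop (nhds (2 * L)) := by
    have hlog1 : Tendsto (fun n : ℕ => Real.log (1 + lam0 n)) atTop (nhds 0) := by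
      have hcont : ContinuousAt (fun t : ℝ => Real.log (1 + t)) 0 := by
        exact (Real.continuousAt_log (by norm_num)).comp (by fun_prop)
      have := hcont.tendsto.comp hlam0
      simpa [Function.comp_def] using this
    have hsub : Tendsto (fun n : ℕ => (Real.log (1 + lam0 n) - Real.log (2 * x * L)) / r n)
        atTop (nhds 0) :=
      (hlog1.sub tendsto_const_nhds).div_atTop hrtop
    have hmain : Tendsto (fun n : ℕ => 2 * L / (1 + lam0 n) *
        (Real.log (r n) / r n + 1 + (Real.log (1 + lam0 n) - Real.log (2 * x * L)) / r n))
        atTop (nhds (2 * L)) := by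
      have h1 : Tendsto (fun n : ℕ => 2 * L / (1 + lam0 n)) atTop (nhds (2 * L)) := by
        have h0 : Tendsto (fun n : ℕ => 1 + lam0 n) atTop (nhds (1 + 0)) :=
          tendsto_const_nhds.add hlam0
        simpa [Pi.div_def] using tendsto_const_nhds.div h0 (by norm_num : (1:ℝ) + 0 ≠ 0)
      have h2 : Tendsto (fun n : ℕ => Real.log (r n) / r n + 1
          + (Real.log (1 + lam0 n) - Real.log (2 * x * L)) / r n) atTop (nhds (0 + 1 + 0)) :=
        (hlogr.add tendsto_const_nhds).add hsub
      have h3 := h1.mul h2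
      norm_num at h3 ⊢
      exact h3
    refine hmain.congr' ?_
    filter_upwards [eventually_ge_atTop 1, hrtop.eventually_ge_atTop 1] with n hn hrn
    obtain ⟨hrpos, heq⟩ := hr n hn
    have hE := Real.exp_pos (r n)
    have hlp := hlampos n
    have hl1 : (0:ℝ) < 1 + lam0 n := by linarith
    have hEx : Real.exp (r n) + x = Real.exp (r n) * (1 + lam0 n) := by
      rw [hlam, Real.exp_neg]
      field_simp
    have hn_eq : (n:ℝ) = r n * (Real.exp (r n) + x) / (2 * x * L) := by
      rw [eq_div_iff (by positivity)]
      linarith [heq]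
    have hlogn : Real.log n = Real.log (r n) + r n + Real.log (1 + lam0 n)
        - Real.log (2 * x * L) := by
      rw [hn_eq, hEx, Real.log_div (by positivity) (by positivity),
        Real.log_mul (by positivity) (by positivity),
        Real.log_mul (by positivity) (by positivity), Real.log_exp]
      ring
    rw [hchi, hlogn, hkey n hn]
    have hr0 : r n ≠ 0 := ne_of_gt hrpos
    field_simp
    ring
  -- Q3 tends to 139
  have hQ : Tendsto (fun n : ℕ => Q3 (a0 n) (lam0 n)) atTop (nhds 139) := by
    have hcont : Continuous (fun p : ℝ × ℝ => Q3 p.1 p.2) := by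
      unfold Q3 P31 P32 P33 P34 P35 P36
      fun_prop
    have := (hcont.tendsto (0, 0)).comp (ha0.prodMk_nhds hlam0)
    have hval : Q3 0 0 = 139 := by norm_num [Q3, P31, P32, P33, P34, P35, P36]
    rw [hval] at this
    exact this
  -- denominator tends to 97200
  have hden : Tendsto (fun n : ℕ => (97200:ℝ) * (1 + 2 * a0 n) ^ 9) atTop (nhds 97200) := by
    have h1 : Tendsto (fun n : ℕ => (1 + 2 * a0 n) ^ 9) atTop (nhds 1) := by
      have h0 : Tendsto (fun n : ℕ => 1 + 2 * a0 n) atTop (nhds (1 + 2 * 0)) :=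
        tendsto_const_nhds.add (ha0.const_mul 2)
      simpa using h0.pow 9
    have h2 : Tendsto (fun n : ℕ => (97200:ℝ) * (1 + 2 * a0 n) ^ 9) atTop
        (nhds (97200 * 1)) := tendsto_const_nhds.mul h1
    simpa using h2
  -- conclude
  have hfin : Tendsto (fun n : ℕ => Q3 (a0 n) (lam0 n) * (chi n) ^ 3
      / (97200 * (1 + 2 * a0 n) ^ 9)) atTop
      (nhds (139 * (2 * L) ^ 3 / 97200)) :=
    (hQ.mul (hchi2.pow 3)).div hden (by norm_num)
  have : (139:ℝ) * (2 * L) ^ 3 / 97200 = 139 / 12150 * L ^ 3 := by ring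
  rw [this] at hfin
  exact hfin.congr (fun n => (hc n).symm)
end
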